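/- arXiv:1810.07107 — 2 statements merged into one kernel-verified Lean document; each statement's English description precedes it below -/
import Mathlib

section
/- If f is an orientation-preserving circle homeomorphism with irrational rotation number, and h, h̃ are two orientation-preserving homeomorphisms of T both satisfying h∘f = T_{ρ(f)}∘h and h̃∘f = T_{ρ(f)}∘h̃, then there exists β ∈ T such that h̃ = T_β∘h. -/
open Filter Topology

/-- `ρ` is the rotation (translation) number of the lift `F`. -/
def IsRotNumber (F : ℝ → ℝ) (ρ : ℝ) : Prop :=
  ∀ x : ℝ, Tendsto (fun n : ℕ => (F^[n] x - x) / (n : ℝ)) atTop (𝓝 ρ)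

/-- A lift of an orientation-preserving homeomorphism of the circle `ℝ/ℤ`. -/
structure CircleHomeoLift where
  toFun : ℝ → ℝ
  continuous_toFun : Continuous toFun
  strictMono_toFun : StrictMono toFun
  map_add_one : ∀ x, toFun (x + 1) = toFun x + 1

lemma CHL.map_add_nat (g : CircleHomeoLift) (x : ℝ) (n : ℕ) :
    g.toFun (x + n) = g.toFun x + n := by
  induction n with
  | zero => simp
  | succ n ih => push_cast; rw [← add_assoc, g.map_add_one, ih]; ring

lemma CHL.map_sub_nat (g : CircleHomeoLift) (x : ℝ) (n : ℕ) :
    g.toFun (x - n) = g.toFun x - n := by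
  have := CHL.map_add_nat g (x - n) n
  simp at this; linarith

lemma CHL.surj (g : CircleHomeoLift) : Function.Surjective g.toFun := by
  intro y
  obtain ⟨n, hn⟩ := exists_nat_ge (|y - g.toFun 0|)
  have h1 : g.toFun (0 - n) ≤ y := by
    rw [CHL.map_sub_nat]
    have h2 : -(n:ℝ) ≤ y - g.toFun 0 := le_trans (neg_le_neg hn) (neg_abs_le _)
    linarith
  have h2 : y ≤ g.toFun (0 + n) := by
    rw [CHL.map_add_nat]
    have := le_trans (le_abs_self _) hn
    linarith
  have hc : ContinuousOn g.toFun (Set.Icc (0 - (n:ℝ)) (0 + n)) := g.continuous_toFun.continuousOn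
  have hm : (0 - (n:ℝ)) ≤ 0 + n := by simp
  obtain ⟨x, _, hx⟩ := intermediate_value_Icc hm hc ⟨h1, h2⟩
  exact ⟨x, hx⟩

/-- **Uniqueness of the conjugacy up to rotation.** If `f` is an orientation-preserving circle
homeomorphism with irrational rotation number `ρ` and `h`, `h̃` are two orientation-preserving
circle homeomorphisms conjugating `f` to the rotation by `ρ`, then `h̃ = T_β ∘ h` for some
`β`, i.e. on lifts `H̃ = H + β`. -/
theorem conjugacy_unique_up_to_rotation (f : CircleHomeoLift) (ρ : ℝ)
    (hρ : IsRotNumber f.toFun ρ) (hirr : Irrational ρ)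
    (h htilde : CircleHomeoLift)
    (hconj : ∀ x, h.toFun (f.toFun x) = h.toFun x + ρ)
    (hconj' : ∀ x, htilde.toFun (f.toFun x) = htilde.toFun x + ρ) :
    ∃ β : ℝ, ∀ x, htilde.toFun x = h.toFun x + β := by
  classical
  let e : ℝ ≃o ℝ := StrictMono.orderIsoOfSurjective h.toFun h.strictMono_toFun (CHL.surj h)
  have he : ∀ x, e x = h.toFun x := fun _ => rfl
  have hes : ∀ y, h.toFun (e.symm y) = y := fun y => e.apply_symm_apply y
  set ψ : ℝ → ℝ := fun y => htilde.toFun (e.symm y) - y with hψdef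
  have hcont : Continuous ψ := by
    have hc : Continuous (e.symm : ℝ → ℝ) := e.toHomeomorph.symm.continuous
    exact (htilde.continuous_toFun.comp hc).sub continuous_id
  have key1 : ∀ y, ψ (y + 1) = ψ y := by
    intro y
    have hsy : e.symm (y + 1) = e.symm y + 1 := by
      apply e.injective
      rw [e.apply_symm_apply, he, h.map_add_one, hes]
    simp only [hψdef, hsy, htilde.map_add_one]
    ring
  have key2 : ∀ y, ψ (y + ρ) = ψ y := by
    intro y
    have hsy : e.symm (y + ρ) = f.toFun (e.symm y) := by
      apply e.injective
      rw [e.apply_symm_apply, he, hconj, hes]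
    simp only [hψdef, hsy, hconj']
    ring
  -- subgroup of periods
  let P : AddSubgroup ℝ :=
    { carrier := {t | ∀ y, ψ (y + t) = ψ y}
      zero_mem' := fun y => by simp
      add_mem' := by
        intro a b ha hb y
        rw [← add_assoc, hb (y + a), ha y]
      neg_mem' := by
        intro a ha y
        have := ha (y + -a)
        rw [add_assoc, neg_add_cancel, add_zero] at this
        exact this.symm }
  have hsub : AddSubgroup.closure ({1, ρ} : Set ℝ) ≤ P := by
    rw [AddSubgroup.closure_le]
    rintro t (rfl | rfl)
    · exact key1
    · exact key2
  -- the closure is dense since ρ is irrational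
  have hdense : Dense ((AddSubgroup.closure ({1, ρ} : Set ℝ) : AddSubgroup ℝ) : Set ℝ) := by
    rcases (AddSubgroup.closure ({1, ρ} : Set ℝ)).dense_or_cyclic with hd | ⟨a, ha⟩
    · exact hd
    · exfalso
      have h1 : (1 : ℝ) ∈ AddSubgroup.closure ({1, ρ} : Set ℝ) :=
        AddSubgroup.subset_closure (by simp)
      have h2 : ρ ∈ AddSubgroup.closure ({1, ρ} : Set ℝ) :=
        AddSubgroup.subset_closure (by simp)
      rw [ha, AddSubgroup.mem_closure_singleton] at h1 h2
      obtain ⟨m, hm⟩ := h1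
      obtain ⟨n, hn⟩ := h2
      rw [zsmul_eq_mul] at hm hn
      have hm0 : (m : ℝ) ≠ 0 := by
        intro h0; rw [h0, zero_mul] at hm; exact one_ne_zero hm.symm
      refine hirr ⟨(n : ℚ) / (m : ℚ), ?_⟩
      push_cast
      field_simp
      rw [← hn]
      have ha0 : a = 1 / (m : ℝ) := by field_simp; linarith [hm]
      rw [ha0]
      field_simp
  -- ψ is constant
  have hconst : ψ = fun _ => ψ 0 := by
    apply Continuous.ext_on hdense hcont continuous_const
    intro t ht
    have := hsub ht 0
    rwa [zero_add] at this
  refine ⟨ψ 0, fun x => ?_⟩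
  have : ψ (h.toFun x) = ψ 0 := by rw [hconst]
  simp only [hψdef] at this
  rw [show e.symm (h.toFun x) = x from e.symm_apply_apply x] at this
  have h0 : ψ 0 = htilde.toFun (e.symm 0) - 0 := rfl
  rw [h0]
  linarith
end

section
/- If f is an orientation-preserving homeomorphism of the circle T = R/Z, f̄ is a lift of f to R, and μ is an f-invariant Borel probability measure on T, then ρ(f̄) = ∫_T (f̄(x) − x) dμ(x), where ρ(f̄) = lim_{n→∞} (f̄ⁿ(x) − x)/n is the rotation number of the lift. -/
open Filter Topology MeasureTheory

/-- A function commuting with `+1` commutes with adding any natural number. -/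
lemma aux_add_nat {g : ℝ → ℝ} (h : ∀ x, g (x + 1) = g x + 1) (x : ℝ) (n : ℕ) :
    g (x + n) = g x + n := by
  induction n with
  | zero => simp
  | succ n ih => push_cast; rw [← add_assoc, h, ih]; ring

/-- Displacement of a monotone `+1`-commuting map varies by at most 1. -/
lemma aux_disp_le {g : ℝ → ℝ} (hm : Monotone g) (h : ∀ x, g (x + 1) = g x + 1)
    (x y : ℝ) : g y - y ≤ g x - x + 1 := by
  obtain ⟨n, hn⟩ : ∃ n : ℕ, y ≤ x + n := by
    obtain ⟨n, hn⟩ := exists_nat_ge (y - x)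
    exact ⟨n, by linarith⟩
  -- find the least n works too, but use floor instead
  set m : ℤ := ⌊y - x⌋ with hm'
  have h1 : x + m ≤ y := by
    have := Int.floor_le (y - x); linarith
  have h2 : y ≤ x + m + 1 := by
    have := Int.lt_floor_add_one (y - x); linarith
  have hgm : ∀ (z : ℝ) (k : ℤ), g (z + k) = g z + k := by
    intro z k
    induction k using Int.induction_on with
    | zero => simp
    | succ k ih => push_cast; rw [← add_assoc, h]; push_cast at ih; rw [ih]; ring
    | pred k ih =>
      have := h (z + (-(k:ℝ) - 1))
      push_cast at ih ⊢
      have h' : z + (-(k:ℝ) - 1) + 1 = z + -(k:ℝ) := by ring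
      rw [h'] at this
      rw [ih] at this
      linarith [this]
  have h3 : g y ≤ g (x + m + 1) := hm (by linarith)
  have h4 : g (x + m + 1) = g x + m + 1 := by
    have : x + (m:ℝ) + 1 = x + ((m + 1 : ℤ) : ℝ) := by push_cast; ring
    rw [this, hgm]; push_cast; ring
  linarith

/-- The rotation number of a lift `F̄` of an orientation-preserving circle homeomorphism `f`
equals `∫_𝕋 (F̄(x) − x) dμ(x)` for any `f`-invariant Borel probability measure `μ` on the
circle `𝕋 = ℝ/ℤ`. Here `φ : 𝕋 → ℝ` is the function induced by the `1`-periodic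
displacement `x ↦ F̄(x) − x`. -/
theorem rotation_number_eq_integral_of_invariant_measure
    (f : AddCircle (1 : ℝ) → AddCircle (1 : ℝ)) (F : CircleHomeoLift)
    (hlift : ∀ x : ℝ, f (x : AddCircle (1 : ℝ)) = (F.toFun x : AddCircle (1 : ℝ)))
    (μ : Measure (AddCircle (1 : ℝ))) [IsProbabilityMeasure μ]
    (hinv : MeasurePreserving f μ μ)
    (φ : AddCircle (1 : ℝ) → ℝ)
    (hφ : ∀ x : ℝ, φ (x : AddCircle (1 : ℝ)) = F.toFun x - x)
    (ρ : ℝ) (hρ : IsRotNumber F.toFun ρ) :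
    ρ = ∫ z, φ z ∂μ := by
  set G := F.toFun with hGdef
  have hG1 : ∀ x, G (x + 1) = G x + 1 := F.map_add_one
  have hGc : Continuous G := F.continuous_toFun
  have hGm : Monotone G := F.strictMono_toFun.monotone
  -- the quotient map
  have hqm : IsQuotientMap ((↑) : ℝ → AddCircle (1 : ℝ)) :=
    QuotientAddGroup.isQuotientMap_mk _
  -- continuity of f and φ
  have hfc : Continuous f := by
    rw [hqm.continuous_iff]
    have : (f ∘ (↑) : ℝ → AddCircle (1:ℝ)) = fun x => ((G x : ℝ) : AddCircle (1:ℝ)) :=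
      funext hlift
    rw [this]
    exact (AddCircle.continuous_mk' 1).comp hGc
  have hφc : Continuous φ := by
    rw [hqm.continuous_iff]
    have : (φ ∘ (↑) : ℝ → ℝ) = fun x => G x - x := funext hφ
    rw [this]
    exact hGc.sub continuous_id
  -- iterates of the lift
  have hiter : ∀ (n : ℕ) (x : ℝ),
      f^[n] (x : AddCircle (1:ℝ)) = ((G^[n] x : ℝ) : AddCircle (1:ℝ)) := by
    intro n
    induction n with
    | zero => intro x; simp
    | succ n ih =>
      intro x
      rw [Function.iterate_succ_apply', Function.iterate_succ_apply', ih, hlift]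
  -- iterates commute with +1
  have hGn1 : ∀ n : ℕ, ∀ x, G^[n] (x + 1) = G^[n] x + 1 := by
    intro n
    induction n with
    | zero => intro x; simp
    | succ n ih =>
      intro x
      rw [Function.iterate_succ_apply', Function.iterate_succ_apply', ih, hG1]
  have hGnm : ∀ n : ℕ, Monotone (G^[n]) := fun n => hGm.iterate n
  -- Birkhoff sums
  set S : ℕ → AddCircle (1:ℝ) → ℝ := fun n z => ∑ k ∈ Finset.range n, φ (f^[k] z) with hS
  have hSlift : ∀ (n : ℕ) (x : ℝ), S n (x : AddCircle (1:ℝ)) = G^[n] x - x := by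
    intro n x
    have : ∀ k, φ (f^[k] (x : AddCircle (1:ℝ))) = G^[k+1] x - G^[k] x := by
      intro k
      rw [hiter, hφ, Function.iterate_succ_apply']
    simp only [hS, this]
    exact Finset.sum_range_sub (fun k => G^[k] x) n
  -- integrability
  have hmeasf : ∀ k : ℕ, Measurable (f^[k]) := fun k => (hfc.measurable).iterate k
  have hint : ∀ k : ℕ, Integrable (fun z => φ (f^[k] z)) μ := by
    intro k
    have hc : Continuous fun z => φ (f^[k] z) := hφc.comp (hfc.iterate k)
    exact hc.integrable_of_hasCompactSupport (HasCompactSupport.of_compactSpace _)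
  -- invariance of the integral
  have hintφ : ∀ k : ℕ, ∫ z, φ (f^[k] z) ∂μ = ∫ z, φ z ∂μ := by
    intro k
    have h1 : MeasurePreserving (f^[k]) μ μ := hinv.iterate k
    rw [← h1.map_eq, integral_map (hmeasf k).aemeasurable
      (hφc.aestronglyMeasurable), h1.map_eq]
  have hintS : ∀ n : ℕ, ∫ z, S n z ∂μ = n * ∫ z, φ z ∂μ := by
    intro n
    simp only [hS]
    rw [integral_finset_sum _ (fun k _ => hint k)]
    simp [hintφ]
  -- uniform bound on S n z - S n 0
  have hbound : ∀ (n : ℕ) (z : AddCircle (1:ℝ)), |S n z - (G^[n] 0 - 0)| ≤ 1 := by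
    intro n z
    obtain ⟨x, rfl⟩ := QuotientAddGroup.mk_surjective z
    rw [hSlift]
    have h1 := aux_disp_le (hGnm n) (hGn1 n) 0 x
    have h2 := aux_disp_le (hGnm n) (hGn1 n) x 0
    rw [abs_le]; constructor <;> linarith
  -- the integral of S n is close to G^[n] 0
  have hclose : ∀ n : ℕ, |(n : ℝ) * ∫ z, φ z ∂μ - (G^[n] 0 - 0)| ≤ 1 := by
    intro n
    rw [← hintS n]
    have h0 : ∫ z, S n z - (G^[n] 0 - 0) ∂μ = ∫ z, S n z ∂μ - (G^[n] 0 - 0) := by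
      rw [integral_sub (by
          simpa [hS] using integrable_finset_sum _ (fun k _ => hint k))
        (integrable_const _)]
      simp
    rw [← h0]
    calc |∫ z, S n z - (G^[n] 0 - 0) ∂μ| ≤ ∫ z, |S n z - (G^[n] 0 - 0)| ∂μ :=
          by simpa [Real.norm_eq_abs] using norm_integral_le_integral_norm (fun z => S n z - (G^[n] 0 - 0))
      _ ≤ ∫ _z, (1 : ℝ) ∂μ := by
          apply integral_mono_of_nonneg (Filter.Eventually.of_forall fun z => abs_nonneg _)
            (integrable_const _)
          exact Filter.Eventually.of_forall fun z => hbound n z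
      _ = 1 := by simp
  -- conclude by uniqueness of limits
  have hlim : Tendsto (fun n : ℕ => (G^[n] 0 - 0) / (n : ℝ)) atTop (𝓝 (∫ z, φ z ∂μ)) := by
    have hdiff : Tendsto (fun n : ℕ => (G^[n] 0 - 0) / (n : ℝ) - ∫ z, φ z ∂μ) atTop (𝓝 0) := by
      apply squeeze_zero_norm' (a := fun n : ℕ => 1 / (n : ℝ))
      · filter_upwards [Filter.eventually_ge_atTop 1] with n hn
        have hn' : (0 : ℝ) < n := by exact_mod_cast hn
        have := hclose n
        rw [Real.norm_eq_abs]
        have heq : (G^[n] 0 - 0) / (n : ℝ) - ∫ z, φ z ∂μ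
            = -(((n : ℝ) * ∫ z, φ z ∂μ - (G^[n] 0 - 0)) / n) := by
          field_simp
          ring
        rw [heq, abs_neg, abs_div, abs_of_pos hn']
        rw [div_le_div_iff₀ hn' hn']
        calc |(n : ℝ) * ∫ z, φ z ∂μ - (G^[n] 0 - 0)| * n ≤ 1 * n := by
              apply mul_le_mul_of_nonneg_right this hn'.le
          _ = 1 * n := rfl
      · exact tendsto_one_div_atTop_nhds_zero_nat
    have := hdiff.add_const (∫ z, φ z ∂μ)
    simpa using this
  exact tendsto_nhds_unique (hρ 0) hlim
end
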